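/- Transport identity for the cofactor: if y : ℝ³ × ℝ → ℝ³ is C² with F = ∇_x y and v = ∂_t y, then ∂_t (cof F)_{kγ} = Σ_{α} ∂_α ( ε_{ijk} ε_{αβγ} F_{jβ} v_i ) for each k, γ (summing over i, j, β as well). -/

import Mathlib

/-- The Levi-Civita symbol on three indices. -/
noncomputable def eps (i j k : Fin 3) : ℝ :=
  ((j : ℝ) - (i : ℝ)) * ((k : ℝ) - (j : ℝ)) * ((k : ℝ) - (i : ℝ)) / 2

/-- The cofactor matrix of a 3×3 matrix. -/
noncomputable def cof (F : Matrix (Fin 3) (Fin 3) ℝ) : Matrix (Fin 3) (Fin 3) ℝ :=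
  Matrix.transpose (Matrix.adjugate F)

/-- Spatial partial derivative in the α-th direction, for functions of `(x, t)`. -/
noncomputable def pdx (f : (Fin 3 → ℝ) × ℝ → ℝ) (α : Fin 3) (p : (Fin 3 → ℝ) × ℝ) : ℝ :=
  fderiv ℝ f p ((Pi.single α 1 : Fin 3 → ℝ), (0 : ℝ))

/-- Time derivative, for functions of `(x, t)`. -/
noncomputable def pdt (f : (Fin 3 → ℝ) × ℝ → ℝ) (p : (Fin 3 → ℝ) × ℝ) : ℝ :=
  fderiv ℝ f p ((0 : Fin 3 → ℝ), (1 : ℝ))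

/-- The spatial deformation gradient `F = ∇ₓ y`. -/
noncomputable def Fmat (y : (Fin 3 → ℝ) × ℝ → Fin 3 → ℝ) (p : (Fin 3 → ℝ) × ℝ) :
    Matrix (Fin 3) (Fin 3) ℝ :=
  fun i α => pdx (fun q => y q i) α p

/-- The velocity `v = ∂ₜ y`. -/
noncomputable def vvec (y : (Fin 3 → ℝ) × ℝ → Fin 3 → ℝ) (p : (Fin 3 → ℝ) × ℝ) : Fin 3 → ℝ :=
  fun i => pdt (fun q => y q i) p

abbrev E3 : Type := (Fin 3 → ℝ) × ℝ

lemma cof_eq (F : Matrix (Fin 3) (Fin 3) ℝ) (k γ : Fin 3) :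
    cof F k γ = ∑ i, ∑ j, ∑ α, ∑ β,
      1/2 * eps i j k * eps α β γ * F i α * F j β := by
  fin_cases k <;> fin_cases γ <;>
    simp [cof, Matrix.adjugate_fin_three, Fin.sum_univ_three, eps] <;>
    norm_num <;> ring

lemma diff_fderiv_apply {f : E3 → ℝ} (hf : ContDiff ℝ 2 f) (w : E3) :
    Differentiable ℝ (fun q => fderiv ℝ f q w) :=
  ((hf.fderiv_right (m := 1) (by norm_num)).differentiable (by norm_num)).clm_apply (differentiable_const w)

lemma fderiv_fderiv_apply {f : E3 → ℝ} (hf : ContDiff ℝ 2 f) (p u w : E3) :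
    fderiv ℝ (fun q => fderiv ℝ f q w) p u = fderiv ℝ (fderiv ℝ f) p u w := by
  have hc : DifferentiableAt ℝ (fderiv ℝ f) p :=
    ((hf.fderiv_right (m := 1) (by norm_num)).differentiable (by norm_num)).differentiableAt
  rw [fderiv_clm_apply hc (differentiableAt_const w)]
  simp

lemma snd_symm {f : E3 → ℝ} (hf : ContDiff ℝ 2 f) (p u w : E3) :
    fderiv ℝ (fderiv ℝ f) p u w = fderiv ℝ (fderiv ℝ f) p w u :=
  second_derivative_symmetric (f' := fderiv ℝ f) (f'' := fderiv ℝ (fderiv ℝ f) p) (x := p)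
    (fun q => ((hf.differentiable (by norm_num)) q).hasFDerivAt)
    ((((hf.fderiv_right (m := 1) (by norm_num)).differentiable (by norm_num)) p).hasFDerivAt) u w

lemma sum_rule {ι : Type*} [Fintype ι] {g : ι → E3 → ℝ} {p u : E3}
    (h : ∀ i, Differentiable ℝ (g i)) :
    fderiv ℝ (fun q => ∑ i, g i q) p u = ∑ i, fderiv ℝ (g i) p u := by
  rw [fderiv_fun_sum fun i _ => ((h i) p)]
  simp

lemma key_mul {f g : E3 → ℝ} (hf : ContDiff ℝ 2 f) (hg : ContDiff ℝ 2 g)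
    (c : ℝ) (p u w1 w2 : E3) :
    fderiv ℝ (fun q => c * fderiv ℝ f q w1 * fderiv ℝ g q w2) p u
      = c * fderiv ℝ (fderiv ℝ f) p u w1 * fderiv ℝ g p w2
        + c * fderiv ℝ f p w1 * fderiv ℝ (fderiv ℝ g) p u w2 := by
  have hgd := (diff_fderiv_apply hg w2) p
  have hfd := (diff_fderiv_apply hf w1) p
  have h1 : DifferentiableAt ℝ (fun q => c * fderiv ℝ f q w1) p := hfd.const_mul c
  rw [fderiv_fun_mul h1 hgd]
  simp only [ContinuousLinearMap.add_apply, ContinuousLinearMap.smul_apply, smul_eq_mul,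
    fderiv_const_mul hfd c, ContinuousLinearMap.smul_apply, smul_eq_mul,
    fderiv_fderiv_apply hf p u w1, fderiv_fderiv_apply hg p u w2]
  ring

set_option maxHeartbeats 4000000 in
lemma swap_lemma (k γ : Fin 3) (A F : Fin 3 → Fin 3 → ℝ) :
    ∑ i, ∑ j, ∑ α, ∑ β, (1/2 * eps i j k * eps α β γ * A i α * F j β
        + 1/2 * eps i j k * eps α β γ * F i α * A j β)
      = ∑ α, ∑ i, ∑ j, ∑ β, eps i j k * eps α β γ * F j β * A i α := by
  fin_cases k <;> fin_cases γ <;>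
    simp only [Fin.sum_univ_three] <;> norm_num [eps] <;> ring

set_option maxHeartbeats 4000000 in
lemma zeroS (k γ : Fin 3) (S : Fin 3 → Fin 3 → Fin 3 → ℝ) (V : Fin 3 → ℝ)
    (hS : ∀ j α β, S j α β = S j β α) :
    ∑ α, ∑ i, ∑ j, ∑ β, eps i j k * eps α β γ * S j α β * V i = 0 := by
  fin_cases k <;> fin_cases γ <;>
    simp only [Fin.sum_univ_three] <;> norm_num [eps]
  · linear_combination V 1 * hS 2 1 2 - V 2 * hS 1 1 2
  · linear_combination V 1 * hS 2 2 0 - V 2 * hS 1 2 0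
  · linear_combination V 1 * hS 2 0 1 - V 2 * hS 1 0 1
  · linear_combination V 2 * hS 0 1 2 - V 0 * hS 2 1 2
  · linear_combination V 2 * hS 0 2 0 - V 0 * hS 2 2 0
  · linear_combination V 2 * hS 0 0 1 - V 0 * hS 2 0 1
  · linear_combination V 0 * hS 1 1 2 - V 1 * hS 0 1 2
  · linear_combination V 0 * hS 1 2 0 - V 1 * hS 0 2 0
  · linear_combination V 0 * hS 1 0 1 - V 1 * hS 0 0 1


/-- Transport identity for the cofactor:
`∂ₜ (cof F)_{kγ} = Σ_α ∂_α (ε_{ijk} ε_{αβγ} F_{jβ} v_i)`. -/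
theorem cof_transport (y : (Fin 3 → ℝ) × ℝ → Fin 3 → ℝ) (hy : ContDiff ℝ 2 y)
    (p : (Fin 3 → ℝ) × ℝ) (k γ : Fin 3) :
    pdt (fun q => cof (Fmat y q) k γ) p
      = ∑ α, pdx (fun q => ∑ i, ∑ j, ∑ β,
          eps i j k * eps α β γ * Fmat y q j β * vvec y q i) α p := by
  have hfi : ∀ i, ContDiff ℝ 2 (fun q => y q i) := fun i => contDiff_pi.mp hy i
  set eb : Fin 3 → E3 := fun β => ((Pi.single β 1 : Fin 3 → ℝ), (0:ℝ)) with heb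
  set et : E3 := ((0 : Fin 3 → ℝ), (1:ℝ)) with het
  set D : Fin 3 → E3 → E3 → ℝ :=
    fun i u w => fderiv ℝ (fderiv ℝ (fun q => y q i)) p u w with hD
  set Fp : Fin 3 → Fin 3 → ℝ := fun j β => fderiv ℝ (fun q => y q j) p (eb β) with hFp
  set Vp : Fin 3 → ℝ := fun i => fderiv ℝ (fun q => y q i) p et with hVp
  have hd2 : ∀ (i j : Fin 3) (c : ℝ) (w1 w2 : E3),
      Differentiable ℝ (fun q =>
        c * fderiv ℝ (fun r => y r i) q w1 * fderiv ℝ (fun r => y r j) q w2) :=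
    fun i j c w1 w2 =>
      ((diff_fderiv_apply (hfi i) w1).const_mul c).mul (diff_fderiv_apply (hfi j) w2)
  -- LHS
  have hL : pdt (fun q => cof (Fmat y q) k γ) p
      = ∑ i, ∑ j, ∑ α, ∑ β,
          (1/2 * eps i j k * eps α β γ * D i et (eb α) * Fp j β
            + 1/2 * eps i j k * eps α β γ * Fp i α * D j et (eb β)) := by
    have hfun : (fun q => cof (Fmat y q) k γ)
        = (fun q => ∑ i, ∑ j, ∑ α, ∑ β, 1/2 * eps i j k * eps α β γ
            * fderiv ℝ (fun r => y r i) q (eb α) * fderiv ℝ (fun r => y r j) q (eb β)) := by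
      funext q
      rw [cof_eq]
      rfl
    rw [pdt, hfun]
    rw [sum_rule (fun i => by
      exact Differentiable.fun_sum fun j _ => Differentiable.fun_sum fun α _ =>
        Differentiable.fun_sum fun β _ => hd2 i j _ _ _)]
    refine Finset.sum_congr rfl fun i _ => ?_
    rw [sum_rule (fun j => Differentiable.fun_sum fun α _ =>
        Differentiable.fun_sum fun β _ => hd2 i j _ _ _)]
    refine Finset.sum_congr rfl fun j _ => ?_
    rw [sum_rule (fun α => Differentiable.fun_sum fun β _ => hd2 i j _ _ _)]
    refine Finset.sum_congr rfl fun α _ => ?_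
    rw [sum_rule (fun β => hd2 i j _ _ _)]
    refine Finset.sum_congr rfl fun β _ => ?_
    exact key_mul (hfi i) (hfi j) _ p et (eb α) (eb β)
  -- RHS
  have hR : ∀ α, pdx (fun q => ∑ i, ∑ j, ∑ β,
        eps i j k * eps α β γ * Fmat y q j β * vvec y q i) α p
      = ∑ i, ∑ j, ∑ β,
          (eps i j k * eps α β γ * D j (eb α) (eb β) * Vp i
            + eps i j k * eps α β γ * Fp j β * D i (eb α) et) := by
    intro α
    have hfun : (fun q => ∑ i, ∑ j, ∑ β,
          eps i j k * eps α β γ * Fmat y q j β * vvec y q i)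
        = (fun q => ∑ i, ∑ j, ∑ β, eps i j k * eps α β γ
            * fderiv ℝ (fun r => y r j) q (eb β) * fderiv ℝ (fun r => y r i) q et) := rfl
    rw [pdx, hfun]
    rw [sum_rule (fun i => Differentiable.fun_sum fun j _ =>
        Differentiable.fun_sum fun β _ => hd2 j i _ _ _)]
    refine Finset.sum_congr rfl fun i _ => ?_
    rw [sum_rule (fun j => Differentiable.fun_sum fun β _ => hd2 j i _ _ _)]
    refine Finset.sum_congr rfl fun j _ => ?_
    rw [sum_rule (fun β => hd2 j i _ _ _)]
    refine Finset.sum_congr rfl fun β _ => ?_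
    exact key_mul (hfi j) (hfi i) _ p (eb α) (eb β) et
  rw [hL]
  rw [Finset.sum_congr rfl fun α _ => hR α]
  have hsym : ∀ i (u w : E3), D i u w = D i w u := fun i u w => snd_symm (hfi i) p u w
  have h1 : ∀ i α, D i (eb α) et = D i et (eb α) := fun i α => hsym i _ _
  simp only [h1]
  rw [swap_lemma]
  have hz := zeroS k γ (fun j α β => D j (eb α) (eb β)) Vp (fun j α β => hsym j _ _)
  beta_reduce at hz
  simp only [Finset.sum_add_distrib]
  rw [hz, zero_add]
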